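/- arXiv:0910.5080 — 2 statements merged into one kernel-verified Lean document; each statement's English description precedes it below -/
import Mathlib

section
/- Let m be a positive integer and e a divisor of m. For a prime l dividing e, write e(l) for the largest power of l dividing e. Then the greatest common divisor of the integers (l-1)·(m/e(l)), taken over all primes l dividing e, divides (e-1)·(m/e). -/
/-- If every prime factor of `e` is `≡ 1 mod n`, then `e ≡ 1 mod n` (for `e > 0`). -/
lemma prod_modeq_one (n : ℕ) : ∀ e : ℕ, 0 < e →
    (∀ l ∈ e.primeFactors, l ≡ 1 [MOD n]) → e ≡ 1 [MOD n] := by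
  intro e
  induction e using Nat.strong_induction_on with
  | _ e ih =>
    intro he hl
    rcases eq_or_lt_of_le (show 1 ≤ e from he) with h1 | h1
    · exact h1 ▸ Nat.ModEq.refl 1
    · obtain ⟨p, hp, hpe⟩ := Nat.exists_prime_and_dvd (by omega : e ≠ 1)
      obtain ⟨c, hc⟩ := hpe
      have he0 : e ≠ 0 := by omega
      have hc0 : 0 < c := by
        rcases Nat.eq_zero_or_pos c with h | h
        · simp [hc, h] at he0
        · exact h
      have hclt : c < e := by
        have := hp.two_le
        nlinarith [hc]
      have hcmod : c ≡ 1 [MOD n] := by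
        refine ih c hclt hc0 (fun l hlmem => hl l ?_)
        rw [Nat.mem_primeFactors] at hlmem ⊢
        exact ⟨hlmem.1, hlmem.2.1.trans ⟨p, by rw [hc]; ring⟩, he0⟩
      have hpmod : p ≡ 1 [MOD n] := by
        refine hl p (Nat.mem_primeFactors.mpr ⟨hp, ⟨c, hc⟩, he0⟩)
      calc e = p * c := hc
        _ ≡ 1 * 1 [MOD n] := Nat.ModEq.mul hpmod hcmod
        _ = 1 := by ring

/-- Key lemma: the gcd over primes `l ∣ e` of `(l-1)·(e/e(l))` divides `e-1`. -/
lemma gcd_dvd_pred (e : ℕ) (he : 1 < e) :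
    (e.primeFactors.gcd fun l => (l - 1) * (e / l ^ e.factorization l)) ∣ e - 1 := by
  set D := e.primeFactors.gcd fun l => (l - 1) * (e / l ^ e.factorization l) with hD
  rw [Nat.dvd_iff_prime_pow_dvd_dvd]
  intro p k hp hpk
  have hpprime : p.Prime := by first | exact hp | exact Nat.prime_iff.mpr hp
  rcases Nat.eq_zero_or_pos k with rfl | hk
  · simpa using one_dvd _
  -- p does not divide e
  have hpe : ¬ p ∣ e := by
    intro hpe
    have hpmem : p ∈ e.primeFactors := Nat.mem_primeFactors.mpr ⟨hpprime, hpe, by omega⟩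
    have hDdvd : D ∣ (p - 1) * (e / p ^ e.factorization p) := Finset.gcd_dvd hpmem
    have hpD : p ∣ D := dvd_trans (dvd_pow_self p (by omega : k ≠ 0)) hpk
    have : p ∣ (p - 1) * (e / p ^ e.factorization p) := hpD.trans hDdvd
    rcases (Nat.Prime.dvd_mul hpprime).mp this with h | h
    · have := Nat.le_of_dvd (by have := hpprime.two_le; omega) h
      have := hpprime.two_le; omega
    · exact Nat.not_dvd_ordCompl hpprime (by omega) h
  -- every prime factor l of e satisfies p^k ∣ l - 1
  have hall : ∀ l ∈ e.primeFactors, l ≡ 1 [MOD p ^ k] := by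
    intro l hlmem
    have hDdvd : D ∣ (l - 1) * (e / l ^ e.factorization l) := Finset.gcd_dvd hlmem
    have hpkdvd : p ^ k ∣ (l - 1) * (e / l ^ e.factorization l) := hpk.trans hDdvd
    have hcop : (p ^ k).Coprime (e / l ^ e.factorization l) := by
      refine Nat.Coprime.pow_left _ ((Nat.Prime.coprime_iff_not_dvd hpprime).mpr ?_)
      intro hcon
      exact hpe (hcon.trans (Nat.ordCompl_dvd e l))
    have : p ^ k ∣ l - 1 := hcop.dvd_of_dvd_mul_right hpkdvd
    have hl1 : 1 ≤ l := (Nat.prime_of_mem_primeFactors hlmem).one_lt.le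
    exact ((Nat.modEq_iff_dvd' hl1).mpr this).symm
  have := prod_modeq_one (p ^ k) e (by omega) hall
  exact (Nat.modEq_iff_dvd' (by omega)).mp this.symm

/-- For `e ∣ m`, the gcd over primes `l ∣ e` of `(l-1)·(m/e(l))`, where `e(l)` is the
`l`-part of `e`, divides `(e-1)·(m/e)`. -/
theorem gcd_dvd_pred_mul (m e : ℕ) (hm : 0 < m) (he : 1 < e) (hdvd : e ∣ m) :
    (e.primeFactors.gcd fun l => (l - 1) * (m / l ^ e.factorization l)) ∣
      (e - 1) * (m / e) := by
  have hkey : (e.primeFactors.gcd fun l => (l - 1) * (m / l ^ e.factorization l))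
      = (m / e) * (e.primeFactors.gcd fun l => (l - 1) * (e / l ^ e.factorization l)) := by
    have hcongr : (e.primeFactors.gcd fun l => (l - 1) * (m / l ^ e.factorization l))
        = e.primeFactors.gcd fun l => (m / e) * ((l - 1) * (e / l ^ e.factorization l)) := by
      refine Finset.gcd_congr rfl (fun l hl => ?_)
      obtain ⟨d, hd⟩ := hdvd
      have hl0 : 0 < l ^ e.factorization l :=
        pow_pos (Nat.prime_of_mem_primeFactors hl).pos _
      have hme : m / e = d := by rw [hd]; exact Nat.mul_div_cancel_left d (by omega)
      have hmeq : m = l ^ e.factorization l * ((e / l ^ e.factorization l) * d) := by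
        conv_lhs => rw [hd, ← Nat.ordProj_mul_ordCompl_eq_self e l]
        ring
      have hml : m / l ^ e.factorization l = (e / l ^ e.factorization l) * d := by
        conv_lhs => rw [hmeq]
        exact Nat.mul_div_cancel_left _ hl0
      rw [hme, hml]; ring
    rw [hcongr, Finset.gcd_mul_left]; simp
  rw [hkey, mul_comm (e - 1) (m / e)]
  exact mul_dvd_mul_left _ (gcd_dvd_pred e he)
end

section
/- Let 𝒢 be a finite group all of whose Sylow subgroups are abelian, and let H be a finite abelian group whose order is coprime to that of 𝒢. Then for any action μ of 𝒢 on H, every Sylow subgroup of the semidirect product H ⋊_μ 𝒢 is abelian. -/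
/-- If all Sylow subgroups of a finite group `G` are abelian and `H` is a finite abelian
group of order coprime to that of `G`, then all Sylow subgroups of `H ⋊[μ] G` are abelian. -/
theorem sylow_commutative_semidirectProduct {H : Type*} [CommGroup H] [Finite H]
    {G : Type*} [Group G] [Finite G] (μ : G →* MulAut H)
    (hG : ∀ (p : ℕ), p.Prime → ∀ P : Sylow p G, IsMulCommutative (P : Subgroup G))
    (hco : (Nat.card H).Coprime (Nat.card G)) :
    ∀ (p : ℕ), p.Prime → ∀ P : Sylow p (H ⋊[μ] G),
      IsMulCommutative (P : Subgroup (H ⋊[μ] G)) := by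
  intro p hp P
  haveI := Fact.mk hp
  haveI : Finite (H ⋊[μ] G) :=
    Finite.of_injective (fun x => (x.left, x.right))
      (fun a b h => SemidirectProduct.ext (congrArg Prod.fst h) (congrArg Prod.snd h))
  have hker : (SemidirectProduct.rightHom : H ⋊[μ] G →* G).ker =
      (SemidirectProduct.inl : H →* H ⋊[μ] G).range :=
    (SemidirectProduct.range_inl_eq_ker_rightHom).symm
  have hcardker : Nat.card ((SemidirectProduct.rightHom : H ⋊[μ] G →* G).ker) = Nat.card H := by
    rw [hker]
    exact Nat.card_congr (Equiv.ofInjective _ SemidirectProduct.inl_injective).symm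
  by_cases hpG : p ∣ Nat.card G
  · -- then p ∤ card H, so P ⊓ ker rightHom = ⊥ and P embeds in G
    have hpH : ¬ p ∣ Nat.card H := fun h =>
      hp.not_dvd_one (hco ▸ Nat.dvd_gcd h hpG)
    have hinf : (P : Subgroup (H ⋊[μ] G)) ⊓
        (SemidirectProduct.rightHom : H ⋊[μ] G →* G).ker = ⊥ := by
      rw [← Subgroup.card_eq_one]
      obtain ⟨k, hk⟩ := (P.2.to_le (inf_le_left : (P : Subgroup (H ⋊[μ] G)) ⊓
        (SemidirectProduct.rightHom : H ⋊[μ] G →* G).ker ≤ _)).exists_card_eq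
      have hdvd : Nat.card ((P : Subgroup (H ⋊[μ] G)) ⊓
          (SemidirectProduct.rightHom : H ⋊[μ] G →* G).ker : Subgroup (H ⋊[μ] G)) ∣ Nat.card H :=
        hcardker ▸ Subgroup.card_dvd_of_le inf_le_right
      rw [hk] at hdvd ⊢
      rcases Nat.eq_zero_or_pos k with rfl | hk0
      · simp
      · exact absurd (dvd_trans (dvd_pow_self p hk0.ne') hdvd) hpH
    -- map P to G and use a Sylow of G
    obtain ⟨Q, hQ⟩ :=
      ((P.2.map (SemidirectProduct.rightHom : H ⋊[μ] G →* G))).exists_le_sylow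
    haveI := hG p hp Q
    constructor
    constructor
    rintro ⟨x, hx⟩ ⟨y, hy⟩
    refine Subtype.ext (show x * y = y * x from ?_)
    have hxQ : SemidirectProduct.rightHom x ∈ (Q : Subgroup G) :=
      hQ (Subgroup.mem_map_of_mem _ hx)
    have hyQ : SemidirectProduct.rightHom y ∈ (Q : Subgroup G) :=
      hQ (Subgroup.mem_map_of_mem _ hy)
    have hcomm := Subgroup.mul_comm_of_mem_isMulCommutative (Q : Subgroup G) hxQ hyQ
    have hmem : x * y * (y * x)⁻¹ ∈ (P : Subgroup (H ⋊[μ] G)) ⊓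
        (SemidirectProduct.rightHom : H ⋊[μ] G →* G).ker := by
      refine Subgroup.mem_inf.mpr ⟨?_, ?_⟩
      · exact mul_mem (mul_mem hx hy) (inv_mem (mul_mem hy hx))
      · simp only [MonoidHom.mem_ker, map_mul, map_inv]
        rw [hcomm]
        group
    rw [hinf, Subgroup.mem_bot] at hmem
    exact mul_inv_eq_one.mp hmem
  · -- p ∤ card G, so rightHom maps P to trivial group, P ≤ ker = inl.range
    have hle : (P : Subgroup (H ⋊[μ] G)) ≤
        (SemidirectProduct.rightHom : H ⋊[μ] G →* G).ker := by
      rw [← Subgroup.map_eq_bot_iff, ← Subgroup.card_eq_one]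
      obtain ⟨k, hk⟩ := (P.2.map (SemidirectProduct.rightHom : H ⋊[μ] G →* G)).exists_card_eq
      have hdvd : Nat.card ((P : Subgroup (H ⋊[μ] G)).map
          (SemidirectProduct.rightHom : H ⋊[μ] G →* G)) ∣ Nat.card G :=
        Subgroup.card_subgroup_dvd_card _
      rw [hk] at hdvd ⊢
      rcases Nat.eq_zero_or_pos k with rfl | hk0
      · simp
      · exact absurd (dvd_trans (dvd_pow_self p hk0.ne') hdvd) hpG
    rw [hker] at hle
    constructor
    constructor
    rintro ⟨x, hx⟩ ⟨y, hy⟩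
    exact Subtype.ext (Subgroup.mul_comm_of_mem_isMulCommutative _ (hle hx) (hle hy))
end
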